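/- Let G be a nontrivial finite group and W = G ≀ Cₙ the wreath product with the cyclic group of order n acting by cyclic permutation on {1,...,n}, with base group B = Gⁿ. If an element fσ ∈ W \ B (with f ∈ B and σ a generator of Cₙ) commutes with b ∈ B, then b(i) = b(1)^{f(1)f(2)⋯f(i−1)} for 1 < i ≤ n, and b(1) centralizes f(1)f(2)⋯f(n) in G. -/
import Mathlib


/-- The Chermak-Delgado measure of a subgroup `H` of `G`: `|H| * |C_G(H)|`. -/
noncomputable def cdMeasure {G : Type*} [Group G] (H : Subgroup G) : ℕ :=
  Nat.card H * Nat.card (Subgroup.centralizer (H : Set G))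

/-- The Chermak-Delgado lattice: subgroups of maximal Chermak-Delgado measure. -/
def CD (G : Type*) [Group G] : Set (Subgroup G) :=
  {H : Subgroup G | ∀ K : Subgroup G, cdMeasure K ≤ cdMeasure H}

/-- The automorphism of the base group `ZMod n → G` shifting coordinates by `k`. -/
def shiftAut (n : ℕ) (G : Type*) [Group G] (k : ZMod n) : MulAut (ZMod n → G) where
  toFun f := fun ω => f (ω + k)
  invFun f := fun ω => f (ω - k)
  left_inv f := by funext ω; simp
  right_inv f := by funext ω; simp
  map_mul' f g := rfl

/-- The shift action of the cyclic group `Cₙ` on the base group `ZMod n → G`. -/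
def shiftHom (n : ℕ) (G : Type*) [Group G] :
    Multiplicative (ZMod n) →* MulAut (ZMod n → G) where
  toFun k := shiftAut n G (Multiplicative.toAdd k)
  map_one' := by
    ext f ω
    simp [shiftAut]
  map_mul' a b := by
    ext f ω
    show f _ = f _
    congr 1
    simp [toAdd_mul, add_assoc]

/-- The wreath product `G ≀ Cₙ`, with `Cₙ` cyclically permuting the `n` copies of `G`. -/
abbrev Wreath (n : ℕ) (G : Type*) [Group G] :=
  SemidirectProduct (ZMod n → G) (Multiplicative (ZMod n)) (shiftHom n G)

/-- The base group `B = Gⁿ` of the wreath product `G ≀ Cₙ`. -/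
def baseSubgroup (n : ℕ) (G : Type*) [Group G] : Subgroup (Wreath n G) :=
  (SemidirectProduct.inl : (ZMod n → G) →* Wreath n G).range

theorem stmt_16 {G : Type*} [Group G] [Finite G] [Nontrivial G] (n : ℕ) (hn : 0 < n)
    (f b : ZMod n → G)
    (hout : (⟨f, Multiplicative.ofAdd (1 : ZMod n)⟩ : Wreath n G) ∉ baseSubgroup n G)
    (hcomm : (⟨f, Multiplicative.ofAdd (1 : ZMod n)⟩ : Wreath n G) * SemidirectProduct.inl b
      = SemidirectProduct.inl b * ⟨f, Multiplicative.ofAdd (1 : ZMod n)⟩) :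
    (∀ i : ℕ, 0 < i → i < n →
      b (i : ZMod n) =
        (((List.range i).map (fun j => f (j : ZMod n))).prod)⁻¹ * b 0 *
          ((List.range i).map (fun j => f (j : ZMod n))).prod) ∧
    Commute (b 0) ((List.range n).map (fun j => f (j : ZMod n))).prod := by
  have key : ∀ ω : ZMod n, f ω * b (ω + 1) = b ω * f ω := by
    intro ω
    have h1 : (⟨f, Multiplicative.ofAdd (1 : ZMod n)⟩ : Wreath n G).left *
        (shiftHom n G (Multiplicative.ofAdd (1 : ZMod n)) b) = b * f := by
      have := congrArg SemidirectProduct.left hcomm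
      simpa [SemidirectProduct.mul_left] using this
    have := congrFun h1 ω
    simpa [shiftHom, shiftAut] using this
  set P : ℕ → G := fun i => ((List.range i).map (fun j => f (j : ZMod n))).prod with hP
  have hPs : ∀ i : ℕ, P (i + 1) = P i * f (i : ZMod n) := by
    intro i
    simp [hP, List.range_succ]
  have main : ∀ i : ℕ, b (i : ZMod n) = (P i)⁻¹ * b 0 * P i := by
    intro i
    induction i with
    | zero => simp [hP]
    | succ i ih =>
      have hc : ((i + 1 : ℕ) : ZMod n) = (i : ZMod n) + 1 := by push_cast; ring
      have hb : b ((i : ZMod n) + 1) = (f (i : ZMod n))⁻¹ * b (i : ZMod n) * f (i : ZMod n) := by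
        rw [mul_assoc, ← key (i : ZMod n), ← mul_assoc]
        simp
      rw [hc, hb, ih, hPs]
      simp [mul_assoc]
  refine ⟨fun i _ _ => main i, ?_⟩
  have := main n
  rw [show ((n : ℕ) : ZMod n) = 0 from by simp] at this
  have h2 : P n * b 0 = b 0 * P n := by
    conv_lhs => rw [this]
    group
  exact h2.symm
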